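/- Let ρ_C, ρ_L, α > 0 and τ_C, τ_B, τ_I > 0, and set I_0 = I_0^crit = (1/(τ_C ρ_C))(1 − τ_B/(τ_B + τ_I(1 + τ_B ρ_L))). Then the equilibria P_2 = ((1/α)(I_0/(τ_I(1/(τ_C ρ_C) − I_0)) − 1/τ_B), 0, 1/(τ_C ρ_C) − I_0) and P_3 = (ρ_L/α, 1/(τ_C ρ_C) − I_0(1 + τ_B/(τ_I(1 + τ_B ρ_L))), I_0/(τ_I(ρ_L + 1/τ_B))) coincide: P_2 = P_3. (This is the collision of equilibria at the transcritical bifurcation between P_2 and P_3.) -/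

import Mathlib

/-- **Transcritical bifurcation between `P₂` and `P₃`.**
At `I₀ = I₀^crit = (1/(τCρC))(1 − τB/(τB + τI(1 + τBρL)))`, the equilibria
`P₂ = ((1/α)(I₀/(τI(1/(τCρC) − I₀)) − 1/τB), 0, 1/(τCρC) − I₀)` and
`P₃ = (ρL/α, 1/(τCρC) − I₀(1 + τB/(τI(1 + τBρL))), I₀/(τI(ρL + 1/τB)))`
coincide. -/
theorem P2_eq_P3_at_transcritical
    (ρC ρL α τC τB τI : ℝ)
    (hρC : 0 < ρC) (hρL : 0 < ρL) (hα : 0 < α)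
    (hτC : 0 < τC) (hτB : 0 < τB) (hτI : 0 < τI)
    (I₀ : ℝ)
    (hI₀ : I₀ = (1 / (τC * ρC)) * (1 - τB / (τB + τI * (1 + τB * ρL)))) :
    ((1 / α) * (I₀ / (τI * (1 / (τC * ρC) - I₀)) - 1 / τB), (0 : ℝ),
        1 / (τC * ρC) - I₀) =
      (ρL / α,
        1 / (τC * ρC) - I₀ * (1 + τB / (τI * (1 + τB * ρL))),
        I₀ / (τI * (ρL + 1 / τB))) := by
  have hD : 0 < τB + τI * (1 + τB * ρL) := by positivity
  have hCC : (0:ℝ) < τC * ρC := by positivity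
  have hdiff : 1 / (τC * ρC) - I₀ = τB / ((τC * ρC) * (τB + τI * (1 + τB * ρL))) := by
    rw [hI₀]; field_simp; ring
  refine Prod.ext ?_ (Prod.ext ?_ ?_) <;> simp only
  · rw [hdiff, hI₀]
    field_simp
    ring
  · rw [hI₀]
    field_simp
    ring
  · rw [hdiff, hI₀]
    field_simp
    ring
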